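/- For every N ≥ 1, every K ∈ ℕ, and every pair of starting decks d₁, d₂ (permutations of Fin N), the total variation distance between the K-step distributions of the inverse uniform riffle shuffle satisfies TV(μ_K(d₁), μ_K(d₂)) ≤ N² · (1/2)^K. -/

import Mathlib

open scoped ENNReal

/-- Total variation distance between two distributions: `(1/2) Σ_x |μ(x) − ν(x)|`. -/
noncomputable def tvDist {X : Type*} (μ ν : PMF X) : ℝ≥0∞ :=
  (1 / 2) * ∑' x, max (μ x - ν x) (ν x - μ x)

/-- One step of the inverse uniform riffle shuffle: sample a uniformly random bit-vector
`b ∈ {0,1}^N`; the new deck lists first, in their original relative order, the cards at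
positions `p` with `b p = false`, followed, in their original relative order, by the cards at
positions `p` with `b p = true`. (The stable sort `Tuple.sort b` of positions by their bit is
exactly this position rearrangement.) -/
noncomputable def riffleStep {N : ℕ} (d : Equiv.Perm (Fin N)) : PMF (Equiv.Perm (Fin N)) :=
  (PMF.uniformOfFintype (Fin N → Bool)).bind fun b =>
    PMF.pure (d * Tuple.sort b)

/-- Distribution of the deck after `K` steps of the inverse uniform riffle shuffle from `d`. -/
noncomputable def riffleWalk {N : ℕ} (d : Equiv.Perm (Fin N)) :
    ℕ → PMF (Equiv.Perm (Fin N))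
  | 0 => PMF.pure d
  | (K + 1) => (riffleWalk d K).bind riffleStep

open scoped Classical

namespace RiffleAux

/-- encode a bit-vector as a natural number, index `j` has weight `2^j`. -/
def enc {K : ℕ} (v : Fin K → Bool) : ℕ := ∑ j : Fin K, if v j then 2^(j:ℕ) else 0

lemma sum_two_pow (K : ℕ) : ∑ j ∈ Finset.range K, 2^j = 2^K - 1 := by
  induction K with
  | zero => simp
  | succ K ih =>
    rw [Finset.sum_range_succ, ih]
    have : 1 ≤ 2^K := Nat.one_le_two_pow
    omega

lemma enc_lt {K : ℕ} (v : Fin K → Bool) : enc v < 2^K := by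
  have h1 : enc v ≤ ∑ j : Fin K, 2^(j:ℕ) := by
    apply Finset.sum_le_sum
    intro j _
    split <;> simp
  have h2 : ∑ j : Fin K, 2^(j:ℕ) = 2^K - 1 := by
    rw [Fin.sum_univ_eq_sum_range]
    exact sum_two_pow K
  have : 1 ≤ 2^K := Nat.one_le_two_pow
  omega

lemma enc_eq_init {K : ℕ} (v : Fin (K+1) → Bool) :
    enc v = enc (Fin.init v) + if v (Fin.last K) then 2^K else 0 := by
  unfold enc
  rw [Fin.sum_univ_castSucc]
  simp [Fin.init]
  rfl

lemma top_add_cancel {M a c : ℕ} {p q : Bool} (ha : a < 2^M) (hc : c < 2^M)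
    (h : a + (if p then 2^M else 0) = c + (if q then 2^M else 0)) : a = c ∧ p = q := by
  cases p <;> cases q <;> simp_all <;> omega

lemma enc_injective {K : ℕ} : Function.Injective (enc : (Fin K → Bool) → ℕ) := by
  induction K with
  | zero => intro v w _; funext j; exact j.elim0
  | succ K ih =>
    intro v w h
    rw [enc_eq_init v, enc_eq_init w] at h
    obtain ⟨h1, h2⟩ := top_add_cancel (enc_lt _) (enc_lt _) h
    have hinit : Fin.init v = Fin.init w := ih h1
    funext j
    refine Fin.lastCases h2 (fun i => ?_) j
    exact congrFun hinit i

lemma enc_snoc {K : ℕ} (v : Fin K → Bool) (b : Bool) :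
    enc (Fin.snoc v b) = enc v + if b then 2^K else 0 := by
  rw [enc_eq_init (Fin.snoc v b)]
  simp [Fin.init_snoc, Fin.snoc_last]

/-- Stable sort composition: sorting by a low key, then stably sorting by a new top bit
(read off in current positions) is the stable sort by the combined key. -/
lemma sort_comp {n M : ℕ} (f : Fin n → ℕ) (hf : ∀ q, f q < 2^M) (b : Fin n → Bool) :
    Tuple.sort f * Tuple.sort b =
      Tuple.sort (fun q => f q + if b ((Tuple.sort f)⁻¹ q) then 2^M else 0) := by
  set σ := Tuple.sort f with hσdef
  set s := Tuple.sort b with hsdef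
  have hσ := Tuple.eq_sort_iff.mp hσdef
  have hs := Tuple.eq_sort_iff.mp hsdef
  set h : Fin n → ℕ := fun q => f q + if b (σ⁻¹ q) then 2^M else 0 with hh
  have hcomp : ∀ i, h ((σ * s) i) = f (σ (s i)) + if b (s i) then 2^M else 0 := by
    intro i
    simp [hh, Equiv.Perm.mul_apply]
  rw [Tuple.eq_sort_iff]
  constructor
  · intro i j hij
    rcases eq_or_lt_of_le hij with rfl | hlt
    · exact le_rfl
    show h ((σ * s) i) ≤ h ((σ * s) j)
    rw [hcomp, hcomp]
    by_cases hbe : b (s i) = b (s j)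
    · have hss : s i < s j := hs.2 i j hlt hbe
      have := hσ.1 hss.le
      rw [hbe]
      exact add_le_add this le_rfl
    · have hblt : b (s i) < b (s j) := lt_of_le_of_ne (hs.1 hlt.le) hbe
      rw [Bool.lt_iff] at hblt
      rw [hblt.1, hblt.2]
      have := hf (σ (s i))
      have := hf (σ (s j))
      simp only [if_neg Bool.false_ne_true, if_pos]
      omega
  · intro i j hij heq
    rw [hcomp, hcomp] at heq
    obtain ⟨hfe, hbe⟩ := top_add_cancel (hf _) (hf _) heq
    have hss : s i < s j := hs.2 i j hij hbe
    simpa [Equiv.Perm.mul_apply] using hσ.2 _ _ hss hfe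

/-- the permutation after applying stable sorts for the bit-vectors `ω 0, ω 1, ...` in order. -/
def Fperm (N : ℕ) : (K : ℕ) → (Fin K → (Fin N → Bool)) → Equiv.Perm (Fin N)
  | 0, _ => 1
  | K+1, ω => Fperm N K (Fin.init ω) * Tuple.sort (ω (Fin.last K))

/-- the label of each original position: bit `j` is the bit assigned at step `j+1`,
read back in original coordinates. -/
def Phi (N : ℕ) : (K : ℕ) → (Fin K → (Fin N → Bool)) → (Fin N → Fin K → Bool)
  | 0, _ => fun _ j => j.elim0
  | K+1, ω => fun q => Fin.snoc (Phi N K (Fin.init ω) q)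
      (ω (Fin.last K) ((Fperm N K (Fin.init ω))⁻¹ q))

lemma Fperm_eq_sort (N : ℕ) : ∀ (K : ℕ) (ω : Fin K → (Fin N → Bool)),
    Fperm N K ω = Tuple.sort (fun q => enc (Phi N K ω q)) := by
  intro K
  induction K with
  | zero =>
    intro ω
    have h0 : (fun q : Fin N => enc (Phi N 0 ω q)) = fun _ => 0 := by
      funext q; simp [Phi, enc]
    rw [h0]
    show (1 : Equiv.Perm (Fin N)) = _
    exact ((Tuple.sort_eq_refl_iff_monotone).mpr monotone_const).symm
  | succ K ih =>
    intro ω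
    have hrec : (fun q => enc (Phi N (K+1) ω q)) =
        fun q => enc (Phi N K (Fin.init ω) q) +
          if (ω (Fin.last K)) ((Fperm N K (Fin.init ω))⁻¹ q) then 2^K else 0 := by
      funext q
      show enc (Fin.snoc _ _) = _
      rw [enc_snoc]
    rw [hrec]
    show Fperm N K (Fin.init ω) * Tuple.sort (ω (Fin.last K)) = _
    rw [ih (Fin.init ω)]
    exact sort_comp _ (fun q => enc_lt _) _

lemma Phi_injective (N K : ℕ) : Function.Injective (Phi N K) := by
  induction K with
  | zero => intro ω ω' _; funext i; exact i.elim0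
  | succ K ih =>
    intro ω ω' h
    have hinit : Phi N K (Fin.init ω) = Phi N K (Fin.init ω') := by
      funext q j
      have := congrFun (congrFun h q) (Fin.castSucc j)
      simpa [Phi, Fin.snoc_castSucc] using this
    have h1 : Fin.init ω = Fin.init ω' := ih hinit
    have h2 : ω (Fin.last K) = ω' (Fin.last K) := by
      funext p
      have := congrFun (congrFun h ((Fperm N K (Fin.init ω)) p)) (Fin.last K)
      simp only [Phi, Fin.snoc_last, h1] at this
      simpa [Equiv.Perm.inv_def] using this
    funext i
    refine Fin.lastCases h2 (fun j => ?_) i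
    exact congrFun h1 j

lemma Phi_bijective (N K : ℕ) : Function.Bijective (Phi N K) := by
  rw [Fintype.bijective_iff_injective_and_card]
  refine ⟨Phi_injective N K, ?_⟩
  simp only [Fintype.card_fun, Fintype.card_bool, Fintype.card_fin]
  rw [← pow_mul, ← pow_mul, Nat.mul_comm]

def keyL {N K : ℕ} (L : Fin N → Fin K → Bool) : Fin N → ℕ := fun q => enc (L q)

lemma keyL_injective {N K : ℕ} {L : Fin N → Fin K → Bool} (h : Function.Injective L) :
    Function.Injective (keyL L) := fun _ _ hab => h (enc_injective hab)

lemma sort_eq_iff_strictMono {n : ℕ} {g : Fin n → ℕ} (hg : Function.Injective g)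
    (π : Equiv.Perm (Fin n)) : Tuple.sort g = π ↔ StrictMono (g ∘ ⇑π) := by
  constructor
  · rintro rfl
    exact (Tuple.monotone_sort g).strictMono_of_injective (hg.comp (Equiv.injective _))
  · intro h
    symm
    exact Tuple.eq_sort_iff.mpr ⟨h.monotone,
      fun i j hij heq => ((hij.ne (π.injective (hg heq))).elim)⟩

def Aset (N K : ℕ) (π : Equiv.Perm (Fin N)) : Finset (Fin N → Fin K → Bool) :=
  Finset.univ.filter fun L => Function.Injective L ∧ Tuple.sort (keyL L) = π

lemma mem_Aset {N K : ℕ} {π : Equiv.Perm (Fin N)} {L} :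
    L ∈ Aset N K π ↔ Function.Injective L ∧ Tuple.sort (keyL L) = π := by
  simp [Aset]

lemma comp_mem_Aset {N K : ℕ} {π ρ : Equiv.Perm (Fin N)} {L} (hL : L ∈ Aset N K π) :
    (L ∘ ⇑ρ) ∈ Aset N K (ρ⁻¹ * π) := by
  rw [mem_Aset] at hL ⊢
  obtain ⟨hinj, hsort⟩ := hL
  have hinj' : Function.Injective (L ∘ ⇑ρ) := hinj.comp (Equiv.injective ρ)
  refine ⟨hinj', ?_⟩
  have hkey : keyL (L ∘ ⇑ρ) = keyL L ∘ ⇑ρ := rfl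
  rw [sort_eq_iff_strictMono (keyL_injective hinj'), hkey]
  have hsm : StrictMono (keyL L ∘ ⇑π) := (sort_eq_iff_strictMono (keyL_injective hinj) π).mp hsort
  have hco : (keyL L ∘ ⇑ρ) ∘ ⇑(ρ⁻¹ * π) = keyL L ∘ ⇑π := by
    funext q; simp [Equiv.Perm.mul_apply]
  rw [hco]; exact hsm

lemma card_Aset (N K : ℕ) (π : Equiv.Perm (Fin N)) :
    (Aset N K π).card = (Aset N K 1).card := by
  refine Finset.card_bij' (fun L _ => L ∘ ⇑π) (fun M _ => M ∘ ⇑π⁻¹) ?_ ?_ ?_ ?_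
  · intro L hL
    simpa using comp_mem_Aset (ρ := π) hL
  · intro M hM
    simpa using comp_mem_Aset (ρ := π⁻¹) hM
  · intro L _; funext q; simp
  · intro M _; funext q; simp

lemma sum_card_Aset (N K : ℕ) :
    ∑ π : Equiv.Perm (Fin N), (Aset N K π).card
      = (Finset.univ.filter fun L : Fin N → Fin K → Bool => Function.Injective L).card := by
  rw [Finset.card_eq_sum_card_fiberwise
    (f := fun L : Fin N → Fin K → Bool => Tuple.sort (keyL L)) (t := Finset.univ)
    (fun x _ => Finset.mem_univ _)]
  apply Finset.sum_congr rfl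
  intro π _
  congr 1
  rw [Finset.filter_filter]
  rfl

lemma card_pair_le {N K : ℕ} {i j : Fin N} (hij : i ≠ j) :
    (Finset.univ.filter fun L : Fin N → Fin K → Bool => L i = L j).card ≤ (2^K)^(N-1) := by
  have hle : (Finset.univ.filter fun L : Fin N → Fin K → Bool => L i = L j).card
      ≤ (Finset.univ : Finset ({x : Fin N // x ≠ j} → (Fin K → Bool))).card := by
    apply Finset.card_le_card_of_injOn
      (fun L => (fun x : {x : Fin N // x ≠ j} => L x.1))
      (fun L _ => Finset.mem_univ _)
    intro L hL M hM h
    simp only [Finset.coe_filter, Set.mem_setOf_eq, Finset.mem_univ, true_and] at hL hM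
    funext q
    by_cases hq : q = j
    · subst hq
      calc L q = L i := hL.symm
        _ = M i := congrFun h ⟨i, hij⟩
        _ = M q := hM
    · exact congrFun h ⟨q, hq⟩
  refine le_trans hle (le_of_eq ?_)
  rw [Finset.card_univ, Fintype.card_fun, Fintype.card_fun, Fintype.card_bool,
    Fintype.card_fin]
  congr 1
  rw [Fintype.card_subtype_compl, Fintype.card_subtype_eq, Fintype.card_fin]

lemma card_notInj_le (N K : ℕ) :
    (Finset.univ.filter fun L : Fin N → Fin K → Bool => ¬ Function.Injective L).card
      ≤ N^2 * (2^K)^(N-1) := by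
  have hsub : (Finset.univ.filter fun L : Fin N → Fin K → Bool => ¬ Function.Injective L)
      ⊆ (Finset.univ.filter fun p : Fin N × Fin N => p.1 ≠ p.2).biUnion
          (fun p => Finset.univ.filter fun L : Fin N → Fin K → Bool => L p.1 = L p.2) := by
    intro L hL
    simp only [Finset.mem_filter, Finset.mem_univ, true_and] at hL
    rw [Function.Injective] at hL
    push_neg at hL
    obtain ⟨a, b, hab, hne⟩ := hL
    apply Finset.mem_biUnion.mpr
    exact ⟨(a, b), by simp [hne], by simp [hab]⟩
  refine le_trans (Finset.card_le_card hsub) (le_trans Finset.card_biUnion_le ?_)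
  calc ∑ p ∈ Finset.univ.filter fun p : Fin N × Fin N => p.1 ≠ p.2,
        (Finset.univ.filter fun L : Fin N → Fin K → Bool => L p.1 = L p.2).card
      ≤ ∑ _p ∈ Finset.univ.filter fun p : Fin N × Fin N => p.1 ≠ p.2, (2^K)^(N-1) := by
        apply Finset.sum_le_sum
        intro p hp
        exact card_pair_le (by simpa using (Finset.mem_filter.mp hp).2)
    _ ≤ N^2 * (2^K)^(N-1) := by
        rw [Finset.sum_const, smul_eq_mul]
        apply Nat.mul_le_mul_right
        calc (Finset.univ.filter fun p : Fin N × Fin N => p.1 ≠ p.2).card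
            ≤ (Finset.univ : Finset (Fin N × Fin N)).card := Finset.card_le_card
              (Finset.filter_subset _ _)
          _ = N^2 := by simp [sq]

lemma sum_card_fiber_Fperm (N K : ℕ) :
    ∑ τ : Equiv.Perm (Fin N),
        (Finset.univ.filter fun ω : Fin K → (Fin N → Bool) => Fperm N K ω = τ).card
      = Fintype.card (Fin K → (Fin N → Bool)) := by
  rw [← Finset.card_univ,
    Finset.card_eq_sum_card_fiberwise (f := fun ω => Fperm N K ω) (t := Finset.univ)
      (fun x _ => Finset.mem_univ _)]

lemma card_fiber_ge (N K : ℕ) (τ : Equiv.Perm (Fin N)) :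
    (Aset N K 1).card
      ≤ (Finset.univ.filter fun ω : Fin K → (Fin N → Bool) => Fperm N K ω = τ).card := by
  rw [← card_Aset N K τ]
  have h1 : (Aset N K τ).card
      = (Finset.univ.filter fun ω : Fin K → (Fin N → Bool) => Phi N K ω ∈ Aset N K τ).card := by
    refine (Finset.card_bij (fun ω _ => Phi N K ω) ?_ ?_ ?_).symm
    · intro ω hω; exact (Finset.mem_filter.mp hω).2
    · intro ω hω ω' hω' h; exact Phi_injective N K h
    · intro L hL
      obtain ⟨ω, rfl⟩ := (Phi_bijective N K).2 L
      exact ⟨ω, Finset.mem_filter.mpr ⟨Finset.mem_univ _, hL⟩, rfl⟩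
  rw [h1]
  apply Finset.card_le_card
  intro ω hω
  simp only [Finset.mem_filter, Finset.mem_univ, true_and] at hω ⊢
  rw [Fperm_eq_sort]
  exact (mem_Aset.mp hω).2

lemma uniform_snoc (K : ℕ) (V : Type*) [Fintype V] [Nonempty V] :
    PMF.uniformOfFintype (Fin (K+1) → V) =
      (PMF.uniformOfFintype (Fin K → V)).bind
        (fun ω => (PMF.uniformOfFintype V).map (Fin.snoc ω)) := by
  ext x
  rw [PMF.bind_apply]
  have hout : ∀ ω : Fin K → V, ω ≠ Fin.init x →
      (PMF.uniformOfFintype (Fin K → V)) ω * (PMF.map (Fin.snoc ω) (PMF.uniformOfFintype V)) x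
        = 0 := by
    intro ω hω
    rw [PMF.map_apply, ENNReal.tsum_eq_zero.mpr, mul_zero]
    intro b
    rw [if_neg]
    intro hx
    exact hω (by rw [hx, Fin.init_snoc])
  rw [tsum_eq_single (Fin.init x) hout]
  have hin : ∀ b : V, b ≠ x (Fin.last K) →
      (@ite ℝ≥0∞ (x = Fin.snoc (Fin.init x) b)
        (Classical.propDecidable (x = Fin.snoc (Fin.init x) b))
        ((PMF.uniformOfFintype V) b) 0) = 0 := by
    intro b hb
    rw [if_neg]
    intro hx
    exact hb (by rw [hx, Fin.snoc_last])
  have hmap : (PMF.map (Fin.snoc (Fin.init x)) (PMF.uniformOfFintype V)) x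
      = (PMF.uniformOfFintype V) (x (Fin.last K)) := by
    rw [PMF.map_apply]
    exact (tsum_eq_single (x (Fin.last K)) hin).trans (if_pos (Fin.snoc_init_self x).symm)
  rw [hmap]
  simp only [PMF.uniformOfFintype_apply]
  rw [Fintype.card_fun, Fintype.card_fun, Fintype.card_fin, Fintype.card_fin, pow_succ,
    Nat.cast_mul]
  rw [ENNReal.mul_inv (Or.inl (by positivity)) (Or.inl (ENNReal.natCast_ne_top _))]

lemma walk_eq {N : ℕ} (d : Equiv.Perm (Fin N)) (K : ℕ) :
    riffleWalk d K = (PMF.uniformOfFintype (Fin K → (Fin N → Bool))).map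
      (fun ω => d * Fperm N K ω) := by
  induction K with
  | zero =>
    show PMF.pure d = _
    have : (fun ω : Fin 0 → (Fin N → Bool) => d * Fperm N 0 ω)
        = Function.const _ d := by
      funext ω; show d * 1 = d; rw [mul_one]
    rw [this, PMF.map_const]
  | succ K ih =>
    show (riffleWalk d K).bind riffleStep = _
    rw [ih, uniform_snoc, PMF.bind_map, PMF.map_bind]
    congr 1
    funext ω
    rw [PMF.map_comp]
    show riffleStep (d * Fperm N K ω) = _
    rw [riffleStep]
    have hfn : ((fun ω => d * Fperm N (K+1) ω) ∘ Fin.snoc ω)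
        = fun b : Fin N → Bool => (d * Fperm N K ω) * Tuple.sort b := by
      funext b
      simp [Function.comp, Fperm, Fin.init_snoc, Fin.snoc_last, mul_assoc]
    rw [hfn]
    rfl

lemma map_uniform_apply {A B : Type*} [Fintype A] [Nonempty A] (f : A → B) (x : B) :
    ((PMF.uniformOfFintype A).map f) x
      = (Finset.univ.filter fun a => f a = x).card / (Fintype.card A : ℝ≥0∞) := by
  rw [PMF.map_apply, tsum_fintype]
  have hterm : ∀ a : A, (if x = f a then (PMF.uniformOfFintype A) a else 0)
      = if f a = x then (Fintype.card A : ℝ≥0∞)⁻¹ else 0 := by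
    intro a
    simp [PMF.uniformOfFintype_apply, eq_comm]
  rw [Finset.sum_congr rfl (fun a _ => hterm a), ← Finset.sum_filter,
    Finset.sum_const, nsmul_eq_mul, div_eq_mul_inv]

end RiffleAux

open RiffleAux in
/-- **Rapid mixing of the inverse uniform riffle shuffle (upper bound).** For any `N ≥ 1`, `K`,
and starting decks `d₁, d₂`, the TV distance between the `K`-step distributions is at most
`N² · (1/2)^K`. -/
theorem riffleWalk_tv_le (N K : ℕ) (hN : 1 ≤ N) (d₁ d₂ : Equiv.Perm (Fin N)) :
    tvDist (riffleWalk d₁ K) (riffleWalk d₂ K)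
      ≤ (N : ℝ≥0∞) ^ 2 * (1 / 2 : ℝ≥0∞) ^ K := by
  classical
  set T : ℝ≥0∞ := (Fintype.card (Fin K → (Fin N → Bool)) : ℝ≥0∞) with hTdef
  have hT0 : T ≠ 0 := Nat.cast_ne_zero.mpr Fintype.card_ne_zero
  -- pointwise value of the walk
  have happly : ∀ d π : Equiv.Perm (Fin N), riffleWalk d K π
      = (((Finset.univ.filter fun ω : Fin K → (Fin N → Bool) =>
          Fperm N K ω = d⁻¹ * π).card : ℝ≥0∞)) / T := by
    intro d π
    rw [walk_eq d K, map_uniform_apply]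
    congr 2
    refine congrArg Finset.card ?_
    ext ω
    simp only [Finset.mem_filter, Finset.mem_univ, true_and]
    constructor
    · intro h; rw [← h, inv_mul_cancel_left]
    · intro h; rw [h, mul_inv_cancel_left]
  have hlow : ∀ d π : Equiv.Perm (Fin N),
      ((Aset N K 1).card : ℝ≥0∞) / T ≤ riffleWalk d K π := by
    intro d π
    rw [happly d π]
    apply ENNReal.div_le_div_right
    exact_mod_cast card_fiber_ge N K (d⁻¹ * π)
  have hterm : ∀ π : Equiv.Perm (Fin N),
      max (riffleWalk d₁ K π - riffleWalk d₂ K π) (riffleWalk d₂ K π - riffleWalk d₁ K π)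
        ≤ (riffleWalk d₁ K π - ((Aset N K 1).card : ℝ≥0∞)/T)
            + (riffleWalk d₂ K π - ((Aset N K 1).card : ℝ≥0∞)/T) := by
    intro π
    apply max_le
    · exact le_trans (tsub_le_tsub le_rfl (hlow d₂ π)) le_self_add
    · exact le_trans (tsub_le_tsub le_rfl (hlow d₁ π)) le_add_self
  -- the ℕ-level count
  have hnat : (∑ τ : Equiv.Perm (Fin N),
      ((Finset.univ.filter fun ω : Fin K → (Fin N → Bool) => Fperm N K ω = τ).card
        - (Aset N K 1).card))
        = (Finset.univ.filter
            fun L : Fin N → Fin K → Bool => ¬ Function.Injective L).card := by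
    have h1 : ∑ τ : Equiv.Perm (Fin N),
        (((Finset.univ.filter fun ω : Fin K → (Fin N → Bool) => Fperm N K ω = τ).card
          - (Aset N K 1).card) + (Aset N K 1).card)
          = ∑ τ : Equiv.Perm (Fin N),
            (Finset.univ.filter fun ω : Fin K → (Fin N → Bool) => Fperm N K ω = τ).card :=
      Finset.sum_congr rfl fun τ _ => Nat.sub_add_cancel (card_fiber_ge N K τ)
    rw [Finset.sum_add_distrib, Finset.sum_const, smul_eq_mul, sum_card_fiber_Fperm] at h1
    have h3 : (Finset.univ : Finset (Equiv.Perm (Fin N))).card * (Aset N K 1).card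
        = (Finset.univ.filter
            fun L : Fin N → Fin K → Bool => Function.Injective L).card := by
      rw [← sum_card_Aset N K]
      rw [Finset.sum_congr rfl (fun π _ => card_Aset N K π), Finset.sum_const, smul_eq_mul]
    have h4 : (Finset.univ.filter
          fun L : Fin N → Fin K → Bool => Function.Injective L).card
        + (Finset.univ.filter
          fun L : Fin N → Fin K → Bool => ¬ Function.Injective L).card
        = Fintype.card (Fin N → Fin K → Bool) := by
      rw [Finset.card_filter_add_card_filter_not, Finset.card_univ]
    have h5 : Fintype.card (Fin K → (Fin N → Bool)) = Fintype.card (Fin N → Fin K → Bool) := by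
      simp only [Fintype.card_fun, Fintype.card_bool, Fintype.card_fin]
      rw [← pow_mul, ← pow_mul, Nat.mul_comm]
    omega
  -- sum of the slacks
  have hsum : ∀ d : Equiv.Perm (Fin N),
      ∑ π : Equiv.Perm (Fin N), (riffleWalk d K π - ((Aset N K 1).card : ℝ≥0∞)/T)
        = ((Finset.univ.filter
            fun L : Fin N → Fin K → Bool => ¬ Function.Injective L).card : ℝ≥0∞) / T := by
    intro d
    have hstep : ∀ π : Equiv.Perm (Fin N),
        riffleWalk d K π - ((Aset N K 1).card : ℝ≥0∞)/T
        = ((((Finset.univ.filter fun ω : Fin K → (Fin N → Bool) =>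
            Fperm N K ω = d⁻¹ * π).card - (Aset N K 1).card : ℕ)) : ℝ≥0∞) / T := by
      intro π
      rw [happly d π, ← ENNReal.sub_div (fun _ _ => hT0)]
      congr 1
      exact (ENNReal.natCast_sub _ _).symm
    rw [Finset.sum_congr rfl (fun π _ => hstep π)]
    simp only [div_eq_mul_inv]
    rw [← Finset.sum_mul, ← Nat.cast_sum]
    have hre : (∑ π : Equiv.Perm (Fin N),
        ((Finset.univ.filter fun ω : Fin K → (Fin N → Bool) =>
          Fperm N K ω = d⁻¹ * π).card - (Aset N K 1).card))
        = ∑ τ : Equiv.Perm (Fin N),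
          ((Finset.univ.filter fun ω : Fin K → (Fin N → Bool) =>
            Fperm N K ω = τ).card - (Aset N K 1).card) :=
      Fintype.sum_equiv (Equiv.mulLeft d⁻¹) _ _ (fun π => rfl)
    rw [hre, hnat]
  -- assembling
  have hmain : tvDist (riffleWalk d₁ K) (riffleWalk d₂ K)
      ≤ ((Finset.univ.filter
          fun L : Fin N → Fin K → Bool => ¬ Function.Injective L).card : ℝ≥0∞) / T := by
    rw [tvDist, tsum_fintype]
    calc (1/2 : ℝ≥0∞) * ∑ π : Equiv.Perm (Fin N),
          max (riffleWalk d₁ K π - riffleWalk d₂ K π) (riffleWalk d₂ K π - riffleWalk d₁ K π)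
        ≤ (1/2 : ℝ≥0∞) * ∑ π : Equiv.Perm (Fin N),
            ((riffleWalk d₁ K π - ((Aset N K 1).card : ℝ≥0∞)/T)
              + (riffleWalk d₂ K π - ((Aset N K 1).card : ℝ≥0∞)/T)) :=
          mul_le_mul_right (Finset.sum_le_sum fun π _ => hterm π) _
      _ = (1/2 : ℝ≥0∞) * (((Finset.univ.filter
            fun L : Fin N → Fin K → Bool => ¬ Function.Injective L).card : ℝ≥0∞) / T
            + ((Finset.univ.filter
            fun L : Fin N → Fin K → Bool => ¬ Function.Injective L).card : ℝ≥0∞) / T) := by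
          rw [Finset.sum_add_distrib, hsum d₁, hsum d₂]
      _ = ((Finset.univ.filter
            fun L : Fin N → Fin K → Bool => ¬ Function.Injective L).card : ℝ≥0∞) / T := by
          rw [← two_mul, ← mul_assoc, one_div,
            ENNReal.inv_mul_cancel two_ne_zero ENNReal.ofNat_ne_top, one_mul]
  have hbadle : (((Finset.univ.filter
      fun L : Fin N → Fin K → Bool => ¬ Function.Injective L).card : ℕ) : ℝ≥0∞)
      ≤ ((N^2 * (2^K)^(N-1) : ℕ) : ℝ≥0∞) := by
    exact_mod_cast card_notInj_le N K
  refine le_trans hmain (le_trans (ENNReal.div_le_div_right hbadle T) ?_)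
  -- final arithmetic
  have hcard : T = 2^(K*(N-1)) * 2^K := by
    rw [hTdef]
    simp only [Fintype.card_fun, Fintype.card_bool, Fintype.card_fin]
    push_cast
    rw [← pow_mul, ← pow_add]
    congr 1
    rw [← Nat.mul_succ, Nat.succ_eq_add_one, Nat.sub_add_cancel hN, Nat.mul_comm]
  rw [hcard]
  push_cast
  rw [← pow_mul]
  rw [mul_comm ((N : ℝ≥0∞)^2) ((2 : ℝ≥0∞)^(K*(N-1)))]
  rw [ENNReal.mul_div_mul_left _ _ (by positivity)
    (ENNReal.pow_ne_top ENNReal.ofNat_ne_top)]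
  rw [div_eq_mul_inv, ENNReal.inv_pow, ← one_div]
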